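/- Let a > 0 and ρ ∈ (−1,1) with (a,ρ) ≠ (1,0), let V_0 be the 2×2 matrix with rows (a, ρ) and (ρ, 1/a), and set q = 4a²ρ² + (a² − 1)², k = a² + 1 + √q, m = a² + 1 − √q. Then the matrix V_0^{1/2} / trace(V_0^{1/2}) (where V_0^{1/2} is the positive definite square root) has (1,1) entry s_{11} = [ √k (4a²ρ² + √q (a² − 1) + (a² − 1)²) + √m (4a²ρ² − √q (a² − 1) + (a² − 1)²) ] / ( 2 q (√m + √k) ) and (1,2) entry s_{12} = a ρ (√k − √m)² / (2q). -/

import Mathlib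

open Matrix Real

/-- entries of the SSCM of a bivariate elliptical distribution with
standardized shape V₀ = [[a,ρ],[ρ,1/a]].  With q = 4a²ρ² + (a²−1)², k = a²+1+√q,
m = a²+1−√q, and R the positive definite square root of V₀, the matrix
S = R / trace R has
S₁₁ = [√k(4a²ρ² + √q(a²−1) + (a²−1)²) + √m(4a²ρ² − √q(a²−1) + (a²−1)²)]/(2q(√m+√k))
and S₁₂ = aρ(√k−√m)²/(2q). -/
theorem sscm_entries_of_standardized_shape
    (a ρ : ℝ) (ha : 0 < a) (hρ₁ : -1 < ρ) (hρ₂ : ρ < 1) (hne : (a, ρ) ≠ (1, 0))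
    (R : Matrix (Fin 2) (Fin 2) ℝ) (hR : R.PosDef)
    (hRsq : R * R = !![a, ρ; ρ, a⁻¹]) :
    (let q := 4 * a ^ 2 * ρ ^ 2 + (a ^ 2 - 1) ^ 2
     let k := a ^ 2 + 1 + Real.sqrt q
     let m := a ^ 2 + 1 - Real.sqrt q
     ((R.trace)⁻¹ • R) 0 0 =
        (Real.sqrt k * (4 * a ^ 2 * ρ ^ 2 + Real.sqrt q * (a ^ 2 - 1) + (a ^ 2 - 1) ^ 2)
          + Real.sqrt m * (4 * a ^ 2 * ρ ^ 2 - Real.sqrt q * (a ^ 2 - 1) + (a ^ 2 - 1) ^ 2))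
        / (2 * q * (Real.sqrt m + Real.sqrt k))
      ∧ ((R.trace)⁻¹ • R) 0 1 = a * ρ * (Real.sqrt k - Real.sqrt m) ^ 2 / (2 * q)) := by
  intro q k m
  have hq : q = 4 * a ^ 2 * ρ ^ 2 + (a ^ 2 - 1) ^ 2 := rfl
  have hk : k = a ^ 2 + 1 + Real.sqrt q := rfl
  have hm : m = a ^ 2 + 1 - Real.sqrt q := rfl
  clear_value q k m
  have ha' : a ≠ 0 := ha.ne'
  -- basic positivity
  have hρ : 0 < 1 - ρ ^ 2 := by nlinarith
  set d := Real.sqrt (1 - ρ ^ 2) with hddef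
  have hd0 : 0 < d := Real.sqrt_pos.2 hρ
  have hd : d ^ 2 = 1 - ρ ^ 2 := Real.sq_sqrt hρ.le
  clear_value d
  have hqpos : 0 < q := by
    rcases eq_or_ne ρ 0 with h | h
    · have ha1 : a ≠ 1 := fun h1 => hne (by rw [h1, h])
      have h2 : a ^ 2 - 1 ≠ 0 := by
        intro h2
        exact ha1 (by nlinarith)
      have h3 : 0 < (a ^ 2 - 1) ^ 2 :=
        lt_of_le_of_ne (sq_nonneg _) (Ne.symm (pow_ne_zero 2 h2))
      rw [hq, h]
      nlinarith [h3]
    · have h3 : 0 < ρ ^ 2 := lt_of_le_of_ne (sq_nonneg _) (Ne.symm (pow_ne_zero 2 h))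
      rw [hq]
      nlinarith [pow_pos ha 2, sq_nonneg (a ^ 2 - 1)]
  have hsq : Real.sqrt q ^ 2 = q := Real.sq_sqrt hqpos.le
  have hsq0 : 0 < Real.sqrt q := Real.sqrt_pos.2 hqpos
  have hkpos : 0 < k := by rw [hk]; positivity
  have hmpos : 0 < m := by
    have h2 : q < (a ^ 2 + 1) ^ 2 := by rw [hq]; nlinarith [mul_pos (mul_pos ha ha) hρ]
    have h1 : Real.sqrt q < a ^ 2 + 1 := by nlinarith [hsq, hsq0]
    rw [hm]; linarith
  set sk := Real.sqrt k with hskdef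
  set sm := Real.sqrt m with hsmdef
  have hsk : sk ^ 2 = k := Real.sq_sqrt hkpos.le
  have hsm : sm ^ 2 = m := Real.sq_sqrt hmpos.le
  have hsk0 : 0 < sk := Real.sqrt_pos.2 hkpos
  have hsm0 : 0 < sm := Real.sqrt_pos.2 hmpos
  have hkm : sk * sm = 2 * a * d := by
    rw [hskdef, hsmdef, ← Real.sqrt_mul hkpos.le]
    have h1 : k * m = (2 * a * d) ^ 2 := by
      rw [hk, hm]
      linear_combination (-1) * hsq - 4 * a ^ 2 * hd - hq
    rw [h1, Real.sqrt_sq (mul_nonneg (by linarith) hd0.le)]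
  clear_value sk sm
  have h12a : sk ^ 2 - sm ^ 2 = 2 * Real.sqrt q := by rw [hsk, hsm, hk, hm]; ring
  have h12b : sk ^ 2 + sm ^ 2 = 2 * (a ^ 2 + 1) := by rw [hsk, hsm, hk, hm]; ring
  -- entries of R
  have hv0 : ((Pi.single 0 1 : Fin 2 → ℝ)) ≠ 0 := by
    intro h
    have h1 := congrFun h 0
    simp at h1
  have hv1 : ((Pi.single 1 1 : Fin 2 → ℝ)) ≠ 0 := by
    intro h
    have h1 := congrFun h 1
    simp at h1
  have hx : (0:ℝ) < R 0 0 := by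
    exact hR.diag_pos
  have hz : (0:ℝ) < R 1 1 := by
    exact hR.diag_pos
  have hsym : R 1 0 = R 0 1 := by
    have h := congrFun (congrFun hR.1 1) 0
    simpa using h.symm
  have e00 := congrFun (congrFun hRsq 0) 0
  have e01 := congrFun (congrFun hRsq 0) 1
  have e11 := congrFun (congrFun hRsq 1) 1
  simp [Matrix.mul_apply, Fin.sum_univ_two, hsym] at e00 e01 e11
  have hdetpos := hR.det_pos
  have hdet2 : R.det = R 0 0 * R 1 1 - R 0 1 * R 0 1 := by rw [Matrix.det_fin_two, hsym]
  -- det R = d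
  have hdetsq : R.det ^ 2 = d ^ 2 := by
    have h1 : (R * R).det = R.det * R.det := Matrix.det_mul R R
    rw [hRsq] at h1
    have h2 : (!![a, ρ; ρ, a⁻¹] : Matrix (Fin 2) (Fin 2) ℝ).det = 1 - ρ ^ 2 := by
      rw [Matrix.det_fin_two]
      simp
      field_simp
    rw [h2] at h1
    linear_combination (-1) * h1 - hd
  have hdetd : R.det = d := by
    have h3 : (R.det - d) * (R.det + d) = 0 := by linear_combination hdetsq
    rcases mul_eq_zero.1 h3 with h4 | h4
    · linarith
    · linarith
  have hdd : R 0 0 * R 1 1 - R 0 1 * R 0 1 = d := hdet2 ▸ hdetd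
  -- trace
  set t := Real.sqrt (a + a⁻¹ + 2 * d) with htdef
  have h2pos : 0 < a + a⁻¹ + 2 * d := by
    have := inv_pos.2 ha
    linarith
  have ht0 : 0 < t := Real.sqrt_pos.2 h2pos
  have ht2 : t ^ 2 = a + a⁻¹ + 2 * d := Real.sq_sqrt h2pos.le
  clear_value t
  have htr : R 0 0 + R 1 1 = t := by
    have hsqr : (R 0 0 + R 1 1) ^ 2 = t ^ 2 := by
      rw [ht2]
      linear_combination e00 + e11 + 2 * hdd
    have h3 : (R 0 0 + R 1 1 - t) * (R 0 0 + R 1 1 + t) = 0 := by linear_combination hsqr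
    rcases mul_eq_zero.1 h3 with h4 | h4
    · linarith
    · linarith
  have htrace : R.trace = t := by rw [Matrix.trace_fin_two]; exact htr
  have htx : R 0 0 * t = a + d := by
    linear_combination e00 + hdd - R 0 0 * htr
  have hty : R 0 1 * t = ρ := by
    linear_combination e01 - R 0 1 * htr
  have hS00 : ((R.trace)⁻¹ • R) 0 0 = (a + d) / (a + a⁻¹ + 2 * d) := by
    rw [Matrix.smul_apply, htrace, smul_eq_mul, eq_div_iff h2pos.ne', ← ht2]
    calc t⁻¹ * R 0 0 * t ^ 2 = R 0 0 * t * (t⁻¹ * t) := by ring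
      _ = a + d := by rw [inv_mul_cancel₀ ht0.ne', htx, mul_one]
  have hS01 : ((R.trace)⁻¹ • R) 0 1 = ρ / (a + a⁻¹ + 2 * d) := by
    rw [Matrix.smul_apply, htrace, smul_eq_mul, eq_div_iff h2pos.ne', ← ht2]
    calc t⁻¹ * R 0 1 * t ^ 2 = R 0 1 * t * (t⁻¹ * t) := by ring
      _ = ρ := by rw [inv_mul_cancel₀ ht0.ne', hty, mul_one]
  have hden : a + a⁻¹ + 2 * d = (a ^ 2 + 1 + 2 * a * d) / a := by
    field_simp
  have hdenpos : 0 < a ^ 2 + 1 + 2 * a * d :=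
    add_pos (by positivity) (mul_pos (mul_pos two_pos ha) hd0)
  constructor
  · rw [hS00]
    have hN : sk * (4 * a ^ 2 * ρ ^ 2 + Real.sqrt q * (a ^ 2 - 1) + (a ^ 2 - 1) ^ 2)
          + sm * (4 * a ^ 2 * ρ ^ 2 - Real.sqrt q * (a ^ 2 - 1) + (a ^ 2 - 1) ^ 2)
        = (sm + sk) * (q + (a ^ 2 - 1) * (a ^ 2 + 1 - 2 * a * d)) := by
      linear_combination (a ^ 2 - 1) * ((sk + sm) / 2) * h12b
        - (a ^ 2 - 1) * ((sk - sm) / 2) * h12a - (a ^ 2 - 1) * (sk + sm) * hkm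
        - (sm + sk) * hq
    rw [hN, mul_comm (2 * q) (sm + sk),
      mul_div_mul_left _ _ (by positivity : (sm + sk) ≠ 0), hden, div_div_eq_mul_div]
    rw [div_eq_div_iff (by positivity) (by positivity), hq]
    linear_combination (4 * a ^ 2 * (a ^ 2 - 1)) * hd
  · rw [hS01]
    have hdiff : (sk - sm) ^ 2 = 2 * (a ^ 2 + 1) - 4 * a * d := by
      linear_combination h12b - 2 * hkm
    rw [hdiff, hden, div_div_eq_mul_div]
    rw [div_eq_div_iff (by positivity) (by positivity), hq]
    linear_combination (8 * a ^ 3 * ρ) * hd
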